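/- Let p ≥ 7 be a prime, q = p^m with 5 | (q+1) and 5 ∤ (q-1), s ≥ 1. Let C = ⟨(x-1)^i f_1(x)^j⟩ be the cyclic code of length 5p^s over F_q, where f_1(x) is one of the irreducible quadratic factors of x^5-1 over F_q, and suppose 2p^{s-1} < i ≤ p^s and 0 < j ≤ p^s. Then the minimum Hamming distance of C equals 4. -/

import Mathlib

open Polynomial

/-- The cyclic code of length `n` over `F` generated by `g` in `F[x]/(xⁿ-1)`,
viewed as a set of coefficient vectors. -/
def cyclicCode (F : Type) [Field F] (n : ℕ) (g : F[X]) : Set (Fin n → F) :=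
  {c | Ideal.Quotient.mk (Ideal.span {(X : F[X]) ^ n - 1})
        (∑ i : Fin n, C (c i) * X ^ (i : ℕ)) ∈
      Ideal.span {Ideal.Quotient.mk (Ideal.span {(X : F[X]) ^ n - 1}) g}}

section Aux
variable {F : Type*} [Field F] {p : ℕ} [hpF : Fact p.Prime] [CharP F p]

private lemma expand_rootMult (T : F[X]) (hT : T ≠ 0) :
    rootMultiplicity 1 (Polynomial.expand F p T) = p * rootMultiplicity 1 T := by
  obtain ⟨V, hTV, hnd⟩ := T.exists_eq_pow_rootMultiplicity_mul_and_not_dvd hT 1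
  have hXC : Polynomial.expand F p (X - C (1:F)) = (X - C (1:F)) ^ p := by
    rw [map_sub, Polynomial.expand_X, Polynomial.expand_C, sub_pow_char]
    simp
  have hexp : Polynomial.expand F p T
      = (X - C (1:F)) ^ (p * rootMultiplicity 1 T) * Polynomial.expand F p V := by
    conv_lhs => rw [hTV]
    rw [map_mul, map_pow, hXC, ← pow_mul]
  have hVne : V ≠ 0 := by
    rintro rfl; exact hT (by simpa using hTV)
  have hexpV : Polynomial.expand F p V ≠ 0 := fun h => hVne (by
    have := Polynomial.expand_injective (hpF.out.pos) (R := F)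
    exact this (by simpa using h))
  have hne : (X - C (1:F)) ^ (p * rootMultiplicity 1 T) * Polynomial.expand F p V ≠ 0 :=
    mul_ne_zero (pow_ne_zero _ (X_sub_C_ne_zero 1)) hexpV
  have hV0 : rootMultiplicity 1 (Polynomial.expand F p V) = 0 := by
    apply rootMultiplicity_eq_zero
    intro hroot
    apply hnd
    rw [dvd_iff_isRoot]
    have : Polynomial.eval 1 (Polynomial.expand F p V) = Polynomial.eval 1 V := by
      rw [Polynomial.expand_eval, one_pow]
    rwa [Polynomial.IsRoot, this] at hroot
  rw [hexp, rootMultiplicity_mul hne, hV0, rootMultiplicity_X_sub_C_pow, add_zero]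

end Aux

section Aux2
variable {F : Type*} [Field F] {p : ℕ} [hpF : Fact p.Prime] [CharP F p]

private lemma binom_mult : ∀ (K : ℕ), 0 < K → ∀ (δ ε : F), ε ≠ 0 → ∀ M : ℕ,
    (X - C 1) ^ M ∣ (C δ + C ε * X ^ K) → M ≤ p ^ (K.factorization p) := by
  intro K
  induction K using Nat.strong_induction_on with
  | _ K ih =>
  intro hK δ ε hε M hdvd
  have hcoeff : (C δ + C ε * X ^ K).coeff K = ε := by
    simp [coeff_C, hK.ne']
  have hT : (C δ + C ε * X ^ K) ≠ 0 := fun h => hε (by rw [h] at hcoeff; simpa using hcoeff.symm)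
  have hM : M ≤ rootMultiplicity 1 (C δ + C ε * X ^ K) :=
    (le_rootMultiplicity_iff hT).mpr hdvd
  by_cases hpK : p ∣ K
  · obtain ⟨K', rfl⟩ := hpK
    have hp0 : 0 < p := hpF.out.pos
    have hK' : 0 < K' := by
      rcases Nat.eq_zero_or_pos K' with h|h
      · subst h; simp at hK
      · exact h
    have hexp : (C δ + C ε * X ^ (p * K') : F[X])
        = Polynomial.expand F p (C δ + C ε * X ^ K') := by
      rw [map_add, map_mul, Polynomial.expand_C, Polynomial.expand_C, map_pow,
        Polynomial.expand_X, ← pow_mul]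
    have hU : (C δ + C ε * X ^ K' : F[X]) ≠ 0 := fun h => hε (by
      have : (C δ + C ε * X ^ K' : F[X]).coeff K' = ε := by simp [coeff_C, hK'.ne']
      rw [h] at this; simpa using this.symm)
    rw [hexp, expand_rootMult _ hU] at hM
    have hrec : rootMultiplicity 1 (C δ + C ε * X ^ K' : F[X]) ≤ p ^ (K'.factorization p) :=
      ih K' (by nlinarith [hpF.out.two_le]) hK' δ ε hε _ (pow_rootMultiplicity_dvd _ _)
    have hfac : (p * K').factorization p = K'.factorization p + 1 := by
      rw [Nat.factorization_mul hp0.ne' hK'.ne', Finsupp.add_apply,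
        hpF.out.factorization_self]
      omega
    calc M ≤ p * rootMultiplicity 1 (C δ + C ε * X ^ K' : F[X]) := hM
      _ ≤ p * p ^ (K'.factorization p) := Nat.mul_le_mul_left _ hrec
      _ = p ^ ((p * K').factorization p) := by rw [hfac, pow_succ, mul_comm]
  · have hKF : (K : F) ≠ 0 := fun h => hpK ((CharP.cast_eq_zero_iff F p K).mp h)
    have hder : derivative (C δ + C ε * X ^ K) = C (ε * K) * X ^ (K - 1) := by
      rw [derivative_add, derivative_C, derivative_C_mul, derivative_X_pow, zero_add]
      rw [C_mul, C_eq_natCast]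
      ring
    have hderne : derivative (C δ + C ε * X ^ K) ≠ 0 := by
      rw [hder]
      intro h
      have : (C (ε * (K:F)) * X ^ (K-1) : F[X]).coeff (K-1) = ε * K := by
        rw [Polynomial.coeff_C_mul, Polynomial.coeff_X_pow]; simp
      rw [h] at this
      exact (mul_ne_zero hε hKF) (by simpa using this.symm)
    have h1 := rootMultiplicity_sub_one_le_derivative_rootMultiplicity_of_ne_zero
      (C δ + C ε * X ^ K) 1 hderne
    have h2 : rootMultiplicity 1 (derivative (C δ + C ε * X ^ K)) = 0 := by
      rw [hder]
      apply rootMultiplicity_eq_zero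
      simp [Polynomial.IsRoot, mul_ne_zero hε hKF]
    rw [h2] at h1
    have : M ≤ 1 := by omega
    calc M ≤ 1 := this
      _ ≤ p ^ (K.factorization p) := Nat.one_le_pow _ _ hpF.out.pos

end Aux2

section Aux3
variable {F : Type*} [Field F] {p : ℕ} [hpF : Fact p.Prime] [CharP F p]

private lemma trinom_coeff_top (a b c : F) (hc : c ≠ 0) {D E : ℕ} (hD : 0 < D) (hDE : D < E) :
    (C a + C b * X ^ D + C c * X ^ E : F[X]) ≠ 0 := by
  intro h
  have : (C a + C b * X ^ D + C c * X ^ E : F[X]).coeff E = c := by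
    rw [coeff_add, coeff_add, coeff_C, coeff_C_mul, coeff_C_mul, coeff_X_pow, coeff_X_pow,
      if_neg hDE.ne', if_neg (by omega), if_pos rfl]
    simp
  rw [h] at this
  exact hc (by simpa using this.symm)

private lemma trinom_mult : ∀ (E D : ℕ), 0 < D → D < E → ∀ (a b c : F),
    a ≠ 0 → b ≠ 0 → c ≠ 0 → ∀ M : ℕ,
    (X - C 1) ^ M ∣ (C a + C b * X ^ D + C c * X ^ E) →
    M ≤ p ^ ((E - D).factorization p) + p ^ (min (D.factorization p) (E.factorization p)) := by
  intro E
  induction E using Nat.strong_induction_on with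
  | _ E ih =>
  intro D hD hDE a b c ha hb hc M hdvd
  have hp0 : 0 < p := hpF.out.pos
  have hp2 : 2 ≤ p := hpF.out.two_le
  have hT : (C a + C b * X ^ D + C c * X ^ E : F[X]) ≠ 0 := trinom_coeff_top a b c hc hD hDE
  have hM : M ≤ rootMultiplicity 1 (C a + C b * X ^ D + C c * X ^ E) :=
    (le_rootMultiplicity_iff hT).mpr hdvd
  by_cases hpDE : p ∣ D ∧ p ∣ E
  · obtain ⟨⟨D', rfl⟩, E', rfl⟩ := hpDE
    have hD' : 0 < D' := Nat.pos_of_ne_zero fun h => by subst h; simp at hD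
    have hD'E' : D' < E' := lt_of_mul_lt_mul_left hDE (by omega)
    have hexp : (C a + C b * X ^ (p * D') + C c * X ^ (p * E') : F[X])
        = Polynomial.expand F p (C a + C b * X ^ D' + C c * X ^ E') := by
      rw [map_add, map_add, map_mul, map_mul, Polynomial.expand_C, Polynomial.expand_C,
        Polynomial.expand_C, map_pow, map_pow, Polynomial.expand_X, ← pow_mul, ← pow_mul]
    have hU : (C a + C b * X ^ D' + C c * X ^ E' : F[X]) ≠ 0 :=
      trinom_coeff_top a b c hc hD' hD'E'
    rw [hexp, expand_rootMult _ hU] at hM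
    have hrec := ih E' (by nlinarith) D' hD' hD'E' a b c ha hb hc _
      (pow_rootMultiplicity_dvd _ _)
    obtain ⟨W, hW, rfl⟩ : ∃ W, 0 < W ∧ E' = D' + W := ⟨E' - D', by omega, by omega⟩
    have hsub : p * (D' + W) - p * D' = p * W := by rw [Nat.mul_add]; omega
    have hsub' : D' + W - D' = W := by omega
    rw [hsub'] at hrec
    have hfacW : (p * W).factorization p = W.factorization p + 1 := by
      rw [Nat.factorization_mul hp0.ne' hW.ne', Finsupp.add_apply, hpF.out.factorization_self]
      omega
    have hfacD : (p * D').factorization p = D'.factorization p + 1 := by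
      rw [Nat.factorization_mul hp0.ne' hD'.ne', Finsupp.add_apply, hpF.out.factorization_self]
      omega
    have hfacE : (p * (D' + W)).factorization p = (D' + W).factorization p + 1 := by
      rw [Nat.factorization_mul hp0.ne' (by omega), Finsupp.add_apply,
        hpF.out.factorization_self]
      omega
    calc M ≤ p * rootMultiplicity 1 (C a + C b * X ^ D' + C c * X ^ (D' + W) : F[X]) := hM
      _ ≤ p * (p ^ (W.factorization p)
            + p ^ (min (D'.factorization p) ((D' + W).factorization p))) :=
          Nat.mul_le_mul_left _ hrec
      _ = p ^ (W.factorization p + 1)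
            + p ^ (min (D'.factorization p) ((D' + W).factorization p) + 1) := by
          rw [Nat.mul_add, pow_succ, pow_succ]; ring
      _ = p ^ ((p * (D' + W) - p * D').factorization p)
            + p ^ (min ((p * D').factorization p) ((p * (D' + W)).factorization p)) := by
          rw [hsub, hfacW, hfacD, hfacE]
          congr 2
          omega
  · -- not both divisible
    have hone : 1 ≤ p ^ (min (D.factorization p) (E.factorization p)) := Nat.one_le_pow _ _ hp0
    suffices hM1 : M ≤ p ^ ((E - D).factorization p) + 1 by
      omega
    have hder : derivative (C a + C b * X ^ D + C c * X ^ E)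
        = C (b * D) * X ^ (D - 1) + C (c * E) * X ^ (E - 1) := by
      rw [derivative_add, derivative_add, derivative_C, derivative_C_mul, derivative_C_mul,
        derivative_X_pow, derivative_X_pow, zero_add, C_mul, C_mul, C_eq_natCast, C_eq_natCast]
      ring
    by_cases hDF : (D : F) = 0
    · have hpD : p ∣ D := (CharP.cast_eq_zero_iff F p D).mp hDF
      have hpE : ¬ p ∣ E := fun h => hpDE ⟨hpD, h⟩
      have hEF : (E : F) ≠ 0 := fun h => hpE ((CharP.cast_eq_zero_iff F p E).mp h)
      have hder' : derivative (C a + C b * X ^ D + C c * X ^ E)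
          = C (c * E) * X ^ (E - 1) := by
        rw [hder, hDF, mul_zero, map_zero, zero_mul, zero_add]
      have hderne : derivative (C a + C b * X ^ D + C c * X ^ E) ≠ 0 := by
        rw [hder']
        intro h
        have h2 : (C (c * (E:F)) * X ^ (E-1) : F[X]).coeff (E-1) = c * E := by
          rw [Polynomial.coeff_C_mul, Polynomial.coeff_X_pow]; simp
        rw [h] at h2
        exact (mul_ne_zero hc hEF) (by simpa using h2.symm)
      have h1 := rootMultiplicity_sub_one_le_derivative_rootMultiplicity_of_ne_zero
        (C a + C b * X ^ D + C c * X ^ E) 1 hderne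
      have h2 : rootMultiplicity 1 (derivative (C a + C b * X ^ D + C c * X ^ E)) = 0 := by
        rw [hder']
        apply rootMultiplicity_eq_zero
        simp [Polynomial.IsRoot, mul_ne_zero hc hEF]
      rw [h2] at h1
      have : M ≤ 1 := by omega
      omega
    · by_cases hEF : (E : F) = 0
      · have hder' : derivative (C a + C b * X ^ D + C c * X ^ E)
            = C (b * D) * X ^ (D - 1) := by
          rw [hder, hEF, mul_zero, map_zero, zero_mul, add_zero]
        have hderne : derivative (C a + C b * X ^ D + C c * X ^ E) ≠ 0 := by
          rw [hder']
          intro h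
          have h2 : (C (b * (D:F)) * X ^ (D-1) : F[X]).coeff (D-1) = b * D := by
            rw [Polynomial.coeff_C_mul, Polynomial.coeff_X_pow]; simp
          rw [h] at h2
          exact (mul_ne_zero hb hDF) (by simpa using h2.symm)
        have h1 := rootMultiplicity_sub_one_le_derivative_rootMultiplicity_of_ne_zero
          (C a + C b * X ^ D + C c * X ^ E) 1 hderne
        have h2 : rootMultiplicity 1 (derivative (C a + C b * X ^ D + C c * X ^ E)) = 0 := by
          rw [hder']
          apply rootMultiplicity_eq_zero
          simp [Polynomial.IsRoot, mul_ne_zero hb hDF]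
        rw [h2] at h1
        omega
      · -- both D, E nonzero in F
        have hfact : derivative (C a + C b * X ^ D + C c * X ^ E)
            = X ^ (D - 1) * (C (b * D) + C (c * E) * X ^ (E - D)) := by
          rw [hder, mul_add, mul_comm (X ^ (D-1) : F[X]) (C (b * (D:F)))]
          congr 1
          rw [← mul_assoc, mul_comm (X ^ (D-1) : F[X]) (C (c * (E:F))), mul_assoc, ← pow_add]
          congr 2
          omega
        have hbinne : (C (b * (D:F)) + C (c * (E:F)) * X ^ (E - D) : F[X]) ≠ 0 := by
          intro h
          have h2 : (C (b * (D:F)) + C (c * (E:F)) * X ^ (E-D) : F[X]).coeff (E-D) = c * E := by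
            rw [coeff_add, coeff_C, Polynomial.coeff_C_mul, Polynomial.coeff_X_pow,
              if_neg (by omega), if_pos rfl]
            simp
          rw [h] at h2
          exact (mul_ne_zero hc hEF) (by simpa using h2.symm)
        have hderne : derivative (C a + C b * X ^ D + C c * X ^ E) ≠ 0 := by
          rw [hfact]
          exact mul_ne_zero (pow_ne_zero _ X_ne_zero) hbinne
        have h1 := rootMultiplicity_sub_one_le_derivative_rootMultiplicity_of_ne_zero
          (C a + C b * X ^ D + C c * X ^ E) 1 hderne
        have h2 : rootMultiplicity 1 (derivative (C a + C b * X ^ D + C c * X ^ E))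
            = rootMultiplicity 1 (C (b * (D:F)) + C (c * (E:F)) * X ^ (E - D) : F[X]) := by
          rw [hfact, rootMultiplicity_mul (by rw [← hfact]; exact hderne),
            rootMultiplicity_eq_zero (by simp [Polynomial.IsRoot]), zero_add]
        have h3 : rootMultiplicity 1 (C (b * (D:F)) + C (c * (E:F)) * X ^ (E - D) : F[X])
            ≤ p ^ ((E - D).factorization p) :=
          binom_mult (E - D) (by omega) _ _ (mul_ne_zero hc hEF) _
            (pow_rootMultiplicity_dvd _ _)
        omega

end Aux3

private lemma pow_le_helper {p s v w : ℕ} (hp : p.Prime) (hp5 : p ≠ 5) (hv : p ^ v ∣ w)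
    (h5 : 5 ∣ w) (hw : 0 < w) (hlt : w < 5 * p ^ s) : p ^ v ≤ p ^ (s - 1) := by
  obtain ⟨w1, rfl⟩ := h5
  have hw1 : 0 < w1 := by omega
  have hcop : Nat.Coprime (p ^ v) 5 :=
    Nat.Coprime.pow_left _ ((Nat.coprime_primes hp (by norm_num)).mpr hp5)
  have hdvd1 : p ^ v ∣ w1 := (Nat.Coprime.dvd_of_dvd_mul_left hcop hv)
  have h1 : p ^ v ≤ w1 := Nat.le_of_dvd hw1 hdvd1
  have h2 : w1 < p ^ s := by omega
  have h3 : p ^ v < p ^ s := by omega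
  have h4 : v < s := (Nat.pow_lt_pow_iff_right hp.one_lt).mp h3
  exact Nat.pow_le_pow_right hp.pos (by omega)

theorem stmt_14 (p m q s : ℕ) (hp : p.Prime) (hp7 : 7 ≤ p) (hm : 0 < m) (hq : q = p ^ m)
    (hs : 1 ≤ s) (h1 : 5 ∣ q + 1) (h2 : ¬ (5 ∣ q - 1))
    (F : Type) [Field F] [Fintype F] [DecidableEq F] (hF : Fintype.card F = q)
    (f₁ : F[X]) (hf₁irr : Irreducible f₁) (hf₁mon : f₁.Monic)
    (hf₁deg : f₁.natDegree = 2) (hf₁dvd : f₁ ∣ X ^ 5 - 1)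
    (i j : ℕ) (hi1 : 2 * p ^ (s - 1) < i) (hi2 : i ≤ p ^ s)
    (hj1 : 0 < j) (hj2 : j ≤ p ^ s) :
    sInf {w | ∃ c ∈ cyclicCode F (5 * p ^ s) ((X - 1) ^ i * f₁ ^ j),
        c ≠ 0 ∧ hammingNorm c = w} = 4 := by
  classical
  haveI hpF : Fact p.Prime := ⟨hp⟩
  have hp0 : 0 < p := hp.pos
  have hp5 : p ≠ 5 := by omega
  haveI hchar : CharP F p := by
    obtain ⟨r, hr⟩ := CharP.exists F
    haveI := hr
    have hrp : r.Prime := CharP.char_is_prime F r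
    obtain ⟨nn, -, hcard⟩ := FiniteField.card F r
    have hpr : p = r := by
      have hdvd : p ∣ r ^ (nn : ℕ) := by
        rw [← hcard, hF, hq]; exact dvd_pow_self p hm.ne'
      exact (Nat.prime_dvd_prime_iff_eq hp hrp).mp (hp.dvd_of_dvd_pow hdvd)
    subst hpr
    exact hr
  have hps1 : 1 ≤ p ^ (s - 1) := Nat.one_le_pow _ _ hp0
  have hps0 : 0 < p ^ s := by positivity
  have hi0 : 0 < i := by omega
  have hn0 : 0 < 5 * p ^ s := by positivity
  have hX1 : (X - 1 : F[X]) = X - C 1 := by rw [map_one]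
  rw [hX1]
  -- the splitting field of f₁
  haveI hfact1 : Fact (Irreducible f₁) := ⟨hf₁irr⟩
  have hf₁ne : f₁ ≠ 0 := hf₁irr.ne_zero
  set K := AdjoinRoot f₁ with hK
  set ζ : K := AdjoinRoot.root f₁ with hζ
  have hζf : aeval ζ f₁ = 0 := by rw [AdjoinRoot.aeval_eq, AdjoinRoot.mk_self]
  have hinj : Function.Injective (algebraMap F K) := (algebraMap F K).injective
  have hζ5 : ζ ^ 5 = 1 := by
    obtain ⟨t, ht⟩ := hf₁dvd
    have h0 : aeval ζ ((X : F[X]) ^ 5 - 1) = 0 := by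
      rw [ht, map_mul, hζf, zero_mul]
    have : ζ ^ 5 - 1 = 0 := by simpa using h0
    exact eq_of_sub_eq_zero this
  have hζne1 : ζ ≠ 1 := by
    intro h
    have h1' : aeval (1 : K) f₁ = 0 := h ▸ hζf
    have h2' : algebraMap F K (f₁.eval 1) = 0 := by
      rw [aeval_def, eval₂_eq_eval_map, Polynomial.eval_one_map] at h1'
      exact h1'
    have h3 : f₁.eval 1 = 0 := by
      apply hinj; simpa using h2'
    have h4 : (X - C 1 : F[X]) ∣ f₁ := dvd_iff_isRoot.mpr h3
    obtain ⟨u, hu⟩ := h4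
    have hune : u ≠ 0 := by rintro rfl; rw [mul_zero] at hu; exact hf₁ne hu
    rcases hf₁irr.isUnit_or_isUnit hu with h5 | h5
    · exact Polynomial.not_isUnit_X_sub_C 1 h5
    · have := Polynomial.natDegree_eq_zero_of_isUnit h5
      have hdeg2 : f₁.natDegree = 1 := by
        rw [hu, Polynomial.natDegree_mul (X_sub_C_ne_zero 1) hune,
          Polynomial.natDegree_X_sub_C, this]
      omega
  haveI : Fact (Nat.Prime 5) := ⟨by norm_num⟩
  have hord : orderOf ζ = 5 := orderOf_eq_prime hζ5 hζne1
  have hζpow : ∀ k : ℕ, ζ ^ k = 1 ↔ 5 ∣ k := by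
    intro k
    rw [← hord, orderOf_dvd_iff_pow_eq_one]
  have hζ0 : ζ ≠ 0 := by
    intro h
    rw [h] at hζ5
    norm_num at hζ5
  haveI hcharK : CharP K p := charP_of_injective_algebraMap hinj p
  have hqcast : ∀ x : F, x ^ q = x := fun x => by rw [← hF]; exact FiniteField.pow_card x
  haveI : ExpChar K p := ExpChar.prime hp
  have hq7 : 7 ≤ q := by
    rw [hq]
    calc 7 ≤ p := hp7
    _ ≤ p ^ m := Nat.le_self_pow hm.ne' p
  have hq5 : q % 5 = 4 := by omega
  have hζq : ζ ^ q = ζ ^ 4 := by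
    conv_lhs => rw [← Nat.div_add_mod q 5]
    rw [pow_add, pow_mul, hζ5, one_pow, one_mul, hq5]
  have hconj : ∀ Q : F[X], aeval ζ Q = 0 → aeval (ζ ^ 4) Q = 0 := by
    intro Q hQ
    let φ : K →ₐ[F] K :=
      { toRingHom := iterateFrobenius K p m
        commutes' := fun x => by
          show iterateFrobenius K p m (algebraMap F K x) = algebraMap F K x
          rw [iterateFrobenius_def, ← map_pow, ← hq, hqcast] }
    have hφζ : φ ζ = ζ ^ 4 := by
      show iterateFrobenius K p m ζ = ζ ^ 4
      rw [iterateFrobenius_def, ← hq, hζq]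
    have := Polynomial.aeval_algHom_apply φ ζ Q
    rw [hQ, map_zero, hφζ] at this
    exact this
  -- basic divisibility facts
  have hXC_ne : (X - C 1 : F[X]) ≠ 0 := X_sub_C_ne_zero 1
  have hX5fac : ((X : F[X]) ^ (5 * p ^ s) - 1) = ((X : F[X]) ^ 5 - 1) ^ p ^ s := by
    rw [sub_pow_char_pow, ← pow_mul, one_pow]
  have hcop1 : IsCoprime (X - C 1 : F[X]) f₁ := by
    have hnd : ¬ f₁ ∣ (X - C 1 : F[X]) := by
      intro hdvd
      have := Polynomial.natDegree_le_of_dvd hdvd hXC_ne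
      rw [hf₁deg, Polynomial.natDegree_X_sub_C] at this
      omega
    exact ((hf₁irr.coprime_iff_not_dvd).mpr hnd).symm
  have hXdvd5 : (X - C 1 : F[X]) ∣ (X : F[X]) ^ 5 - 1 := by
    apply dvd_iff_isRoot.mpr
    simp [Polynomial.IsRoot]
  have hmul5 : (X - C 1 : F[X]) * f₁ ∣ (X : F[X]) ^ 5 - 1 := hcop1.mul_dvd hXdvd5 hf₁dvd
  have hgdvd : (X - C 1 : F[X]) ^ i * f₁ ^ j ∣ (X : F[X]) ^ (5 * p ^ s) - 1 := by
    rw [hX5fac]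
    calc (X - C 1 : F[X]) ^ i * f₁ ^ j ∣ (X - C 1) ^ p ^ s * f₁ ^ p ^ s :=
      mul_dvd_mul (pow_dvd_pow _ hi2) (pow_dvd_pow _ hj2)
    _ = ((X - C 1) * f₁) ^ p ^ s := (mul_pow _ _ _).symm
    _ ∣ ((X : F[X]) ^ 5 - 1) ^ p ^ s := pow_dvd_pow_of_dvd hmul5 _
  have hf₁prime : Prime f₁ := hf₁irr.prime
  have hf₁ndvdX : ¬ f₁ ∣ (X : F[X]) := by
    intro hdvd
    have := Polynomial.natDegree_le_of_dvd hdvd X_ne_zero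
    rw [hf₁deg, Polynomial.natDegree_X] at this
    omega
  have hcopX : IsCoprime (X - C 1 : F[X]) X := ⟨-1, 1, by rw [map_one]; ring⟩
  -- the key lower bound: any nonzero multiple of (X-1)^i * f₁ of degree < 5p^s has ≥ 4 terms
  have key : ∀ Q : F[X], Q ≠ 0 → Q.natDegree < 5 * p ^ s →
      (X - C 1 : F[X]) ^ i ∣ Q → f₁ ∣ Q → 4 ≤ Q.support.card := by
    intro Q hQ0 hQdeg hQi hQf
    by_contra hlt
    push_neg at hlt
    have hX1dvd : (X - C 1 : F[X]) ∣ Q := (dvd_pow_self _ hi0.ne').trans hQi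
    have hcases : Q.support.card = 0 ∨ Q.support.card = 1 ∨ Q.support.card = 2 ∨
        Q.support.card = 3 := by omega
    rcases hcases with h0 | h1 | h2' | h3'
    · exact hQ0 (Polynomial.support_eq_empty.mp (Finset.card_eq_zero.mp h0))
    · obtain ⟨k, x, hx, rfl⟩ := Polynomial.card_support_eq_one.mp h1
      have := dvd_iff_isRoot.mp hX1dvd
      simp [Polynomial.IsRoot] at this
      exact hx this
    · obtain ⟨k, m', hkm, x, y, hx, hy, rfl⟩ := Polynomial.card_support_eq_two.mp h2'
      set D := m' - k with hDdef
      have hD0 : 0 < D := by omega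
      have hfac : (C x * X ^ k + C y * X ^ m' : F[X]) = X ^ k * (C x + C y * X ^ D) := by
        have hm2 : m' = k + D := by omega
        rw [hm2, pow_add]; ring
      rw [hfac] at hQi hQf hQ0 hQdeg hX1dvd
      have hBi : (X - C 1 : F[X]) ^ i ∣ (C x + C y * X ^ D) :=
        (hcopX.pow).dvd_of_dvd_mul_left hQi
      have hBf : f₁ ∣ (C x + C y * X ^ D) := by
        rcases hf₁prime.2.2 _ _ hQf with hl | hr
        · exact absurd (hf₁prime.dvd_of_dvd_pow hl) hf₁ndvdX
        · exact hr
      have hB1 : x + y = 0 := by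
        have hdvd := (dvd_pow_self (X - C 1 : F[X]) hi0.ne').trans hBi
        have hr := dvd_iff_isRoot.mp hdvd
        rw [Polynomial.IsRoot, eval_add, eval_C, eval_mul, eval_C, eval_pow, eval_X,
          one_pow, mul_one] at hr
        exact hr
      have hBζ : algebraMap F K x + algebraMap F K y * ζ ^ D = 0 := by
        obtain ⟨t, ht⟩ := hBf
        have hz0 : aeval ζ (C x + C y * X ^ D) = 0 := by rw [ht, map_mul, hζf, zero_mul]
        rw [map_add, map_mul, map_pow, aeval_C, aeval_C, aeval_X] at hz0
        exact hz0
      have h5D : 5 ∣ D := by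
        have hxy : algebraMap F K x + algebraMap F K y = 0 := by
          rw [← map_add, hB1, map_zero]
        have hprod : algebraMap F K y * (ζ ^ D - 1) = 0 := by linear_combination hBζ - hxy
        rcases mul_eq_zero.mp hprod with h | h
        · exact absurd (hinj (by simpa using h)) hy
        · exact (hζpow D).mp (eq_of_sub_eq_zero h)
      have hDlt : D < 5 * p ^ s := by
        have hm'le : m' ≤ (X ^ k * (C x + C y * X ^ D) : F[X]).natDegree := by
          apply Polynomial.le_natDegree_of_ne_zero
          rw [← hfac, coeff_add, coeff_C_mul, coeff_C_mul, coeff_X_pow, coeff_X_pow,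
            if_neg (by omega), if_pos rfl]
          simpa using hy
        omega
      have himult := binom_mult (p := p) D hD0 x y hy i hBi
      have hple : p ^ (D.factorization p) ≤ p ^ (s - 1) :=
        pow_le_helper hp hp5 (Nat.ordProj_dvd D p) h5D hD0 hDlt
      omega
    · obtain ⟨k, m', n', hkm, hmn, x, y, z, hx, hy, hz, rfl⟩ :=
        Polynomial.card_support_eq_three.mp h3'
      set D := m' - k with hDdef
      set E := n' - k with hEdef
      have hD0 : 0 < D := by omega
      have hDE : D < E := by omega
      have hfac : (C x * X ^ k + C y * X ^ m' + C z * X ^ n' : F[X])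
          = X ^ k * (C x + C y * X ^ D + C z * X ^ E) := by
        have hm2 : m' = k + D := by omega
        have hn2 : n' = k + E := by omega
        rw [hm2, hn2, pow_add, pow_add]; ring
      rw [hfac] at hQi hQf hQ0 hQdeg hX1dvd
      have hBi : (X - C 1 : F[X]) ^ i ∣ (C x + C y * X ^ D + C z * X ^ E) :=
        (hcopX.pow).dvd_of_dvd_mul_left hQi
      have hBf : f₁ ∣ (C x + C y * X ^ D + C z * X ^ E) := by
        rcases hf₁prime.2.2 _ _ hQf with hl | hr
        · exact absurd (hf₁prime.dvd_of_dvd_pow hl) hf₁ndvdX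
        · exact hr
      have hB1 : x + y + z = 0 := by
        have hdvd := (dvd_pow_self (X - C 1 : F[X]) hi0.ne').trans hBi
        have hr := dvd_iff_isRoot.mp hdvd
        rw [Polynomial.IsRoot, eval_add, eval_add, eval_C, eval_mul, eval_mul, eval_C,
          eval_C, eval_pow, eval_pow, eval_X, one_pow, one_pow, mul_one, mul_one] at hr
        exact hr
      have hBζ0 : aeval ζ (C x + C y * X ^ D + C z * X ^ E) = 0 := by
        obtain ⟨t, ht⟩ := hBf
        rw [ht, map_mul, hζf, zero_mul]
      have hBζ : algebraMap F K x + algebraMap F K y * ζ ^ D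
          + algebraMap F K z * ζ ^ E = 0 := by
        have := hBζ0
        rw [map_add, map_add, map_mul, map_mul, map_pow, map_pow, aeval_C, aeval_C, aeval_C,
          aeval_X] at this
        exact this
      have hBζ4 : algebraMap F K x + algebraMap F K y * ζ ^ (4 * D)
          + algebraMap F K z * ζ ^ (4 * E) = 0 := by
        have h0 := hconj _ hBζ0
        rw [map_add, map_add, map_mul, map_mul, map_pow, map_pow, aeval_C, aeval_C, aeval_C,
          aeval_X, ← pow_mul, ← pow_mul] at h0
        exact h0
      have hxyz : algebraMap F K x + algebraMap F K y + algebraMap F K z = 0 := by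
        rw [← map_add, ← map_add, hB1, map_zero]
      have eqA : algebraMap F K y * (ζ ^ D - 1) + algebraMap F K z * (ζ ^ E - 1) = 0 := by
        linear_combination hBζ - hxyz
      have eqB : algebraMap F K y * (ζ ^ (4*D) - 1)
          + algebraMap F K z * (ζ ^ (4*E) - 1) = 0 := by
        linear_combination hBζ4 - hxyz
      have h4D : ζ ^ (4*D) * ζ ^ D = 1 := by
        rw [← pow_add]
        have h5d : 4*D + D = 5*D := by ring
        rw [h5d, pow_mul, hζ5, one_pow]
      have h4E : ζ ^ (4*E) * ζ ^ E = 1 := by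
        rw [← pow_add]
        have h5e : 4*E + E = 5*E := by ring
        rw [h5e, pow_mul, hζ5, one_pow]
      have key2 : algebraMap F K z * (ζ ^ E - 1) * (ζ ^ (4*D) - ζ ^ (4*E)) = 0 := by
        linear_combination (ζ ^ (4*D)) * eqA + eqB - algebraMap F K y * h4D
          - algebraMap F K z * h4E
      have h5DE : 5 ∣ D ∧ 5 ∣ E := by
        rcases mul_eq_zero.mp key2 with hzz | hUV
        · rcases mul_eq_zero.mp hzz with hzz2 | hv1
          · exact absurd (hinj (by simpa using hzz2)) hz
          · have hE1 : ζ ^ E = 1 := eq_of_sub_eq_zero hv1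
            have h5E : 5 ∣ E := (hζpow E).mp hE1
            have hyd : algebraMap F K y * (ζ ^ D - 1) = 0 := by
              rw [hE1] at eqA; linear_combination eqA
            rcases mul_eq_zero.mp hyd with h | h
            · exact absurd (hinj (by simpa using h)) hy
            · exact ⟨(hζpow D).mp (eq_of_sub_eq_zero h), h5E⟩
        · have hUV' : ζ ^ (4*D) = ζ ^ (4*E) := eq_of_sub_eq_zero hUV
          have h4ED : ζ ^ (4*(E - D)) = 1 := by
            have h44 : 4*E = 4*D + 4*(E-D) := by omega
            rw [h44, pow_add] at hUV'
            have hne : (ζ : K) ^ (4*D) ≠ 0 := pow_ne_zero _ hζ0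
            exact (mul_left_cancel₀ hne (by rw [← hUV', mul_one])).symm
          have h5ED : 5 ∣ E - D := by
            have := (hζpow (4*(E-D))).mp h4ED
            omega
          have hED : ζ ^ E = ζ ^ D := by
            have hEeq : E = D + (E - D) := by omega
            rw [hEeq, pow_add, (hζpow (E-D)).mpr h5ED, mul_one]
          have hyzd : (algebraMap F K y + algebraMap F K z) * (ζ ^ D - 1) = 0 := by
            rw [hED] at eqA; linear_combination eqA
          rcases mul_eq_zero.mp hyzd with h | h
          · have hx0 : algebraMap F K x = 0 := by linear_combination hxyz - h
            exact absurd (hinj (by simpa using hx0)) hx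
          · have h5D : 5 ∣ D := (hζpow D).mp (eq_of_sub_eq_zero h)
            exact ⟨h5D, by omega⟩
      obtain ⟨h5D, h5E⟩ := h5DE
      have hElt : E < 5 * p ^ s := by
        have hn'le : n' ≤ (X ^ k * (C x + C y * X ^ D + C z * X ^ E) : F[X]).natDegree := by
          apply Polynomial.le_natDegree_of_ne_zero
          rw [← hfac, coeff_add, coeff_add, coeff_C_mul, coeff_C_mul, coeff_C_mul,
            coeff_X_pow, coeff_X_pow, coeff_X_pow, if_neg (by omega), if_neg (by omega),
            if_pos rfl]
          simpa using hz
        omega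
      have himult := trinom_mult (p := p) E D hD0 hDE x y z hx hy hz i hBi
      have hple1 : p ^ ((E - D).factorization p) ≤ p ^ (s - 1) :=
        pow_le_helper hp hp5 (Nat.ordProj_dvd _ p) (by omega) (by omega) (by omega)
      have hple2 : p ^ (min (D.factorization p) (E.factorization p)) ≤ p ^ (s - 1) := by
        calc p ^ (min (D.factorization p) (E.factorization p)) ≤ p ^ (E.factorization p) :=
          Nat.pow_le_pow_right hp0 (min_le_right _ _)
        _ ≤ p ^ (s-1) := pow_le_helper hp hp5 (Nat.ordProj_dvd _ p) h5E (by omega) (by omega)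
      omega
  -- codeword/polynomial correspondence
  set n : ℕ := 5 * p ^ s with hndef
  have hPcoeff : ∀ (c : Fin n → F) (k : Fin n),
      (∑ i : Fin n, C (c i) * X ^ (i : ℕ)).coeff (k : ℕ) = c k := by
    intro c k
    rw [finset_sum_coeff, Finset.sum_eq_single k]
    · rw [coeff_C_mul, coeff_X_pow, if_pos rfl, mul_one]
    · intro b _ hbk
      rw [coeff_C_mul, coeff_X_pow, if_neg (fun h => hbk (Fin.val_injective h.symm)), mul_zero]
    · intro hk; exact absurd (Finset.mem_univ k) hk
  have hPdeg : ∀ c : Fin n → F, (∑ i : Fin n, C (c i) * X ^ (i : ℕ)).natDegree < n := by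
    intro c
    have h : (∑ i : Fin n, C (c i) * X ^ (i : ℕ)).natDegree ≤ n - 1 := by
      apply Polynomial.natDegree_sum_le_of_forall_le
      intro i _
      exact le_trans (Polynomial.natDegree_C_mul_X_pow_le _ _) (by have := i.isLt; omega)
    omega
  have hPne : ∀ c : Fin n → F, c ≠ 0 → (∑ i : Fin n, C (c i) * X ^ (i : ℕ)) ≠ 0 := by
    intro c hc h
    apply hc
    funext k
    have hck := hPcoeff c k
    rw [h, coeff_zero] at hck
    exact hck.symm
  have hmem_dvd : ∀ c : Fin n → F,
      c ∈ cyclicCode F n ((X - C 1) ^ i * f₁ ^ j) →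
      (X - C 1 : F[X]) ^ i * f₁ ^ j ∣ (∑ i : Fin n, C (c i) * X ^ (i : ℕ)) := by
    intro c hc
    rw [cyclicCode, Set.mem_setOf_eq, Ideal.mem_span_singleton] at hc
    obtain ⟨r, hr⟩ := hc
    obtain ⟨h, rfl⟩ := Ideal.Quotient.mk_surjective r
    rw [← map_mul] at hr
    have hmem := Ideal.Quotient.eq.mp hr
    rw [Ideal.mem_span_singleton] at hmem
    obtain ⟨t, ht⟩ := hmem
    obtain ⟨w', hw'⟩ := hgdvd
    exact ⟨h + w' * t, by linear_combination ht + t * hw'⟩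
  have hPQall : ∀ Q : F[X], Q.natDegree < n →
      (∑ i : Fin n, C (Q.coeff (i : ℕ)) * X ^ (i : ℕ)) = Q := by
    intro Q hQdeg
    conv_rhs => rw [Polynomial.as_sum_range' Q n hQdeg]
    rw [Fin.sum_univ_eq_sum_range (fun k => C (Q.coeff k) * X ^ k)]
    exact Finset.sum_congr rfl fun k _ => Polynomial.C_mul_X_pow_eq_monomial
  have hdvd_mem : ∀ Q : F[X], Q.natDegree < n → (X - C 1 : F[X]) ^ i * f₁ ^ j ∣ Q →
      (fun k : Fin n => Q.coeff (k : ℕ)) ∈ cyclicCode F n ((X - C 1) ^ i * f₁ ^ j) := by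
    intro Q hQdeg hdvd
    rw [cyclicCode, Set.mem_setOf_eq]
    rw [hPQall Q hQdeg, Ideal.mem_span_singleton]
    exact map_dvd _ hdvd
  have hnorm_ge : ∀ c : Fin n → F,
      (∑ i : Fin n, C (c i) * X ^ (i : ℕ)).support.card ≤ hammingNorm c := by
    intro c
    apply Finset.card_le_card_of_injOn (fun k => (⟨k % n, Nat.mod_lt _ hn0⟩ : Fin n))
    · intro k hk
      have hkne := Polynomial.mem_support_iff.mp hk
      have hkdeg : k < n := by
        have h1' := Polynomial.le_natDegree_of_ne_zero hkne
        have := hPdeg c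
        omega
      have hmod : k % n = k := Nat.mod_eq_of_lt hkdeg
      apply Finset.mem_filter.mpr
      refine ⟨Finset.mem_univ _, ?_⟩
      have hfin : (⟨k % n, Nat.mod_lt _ hn0⟩ : Fin n) = ⟨k, hkdeg⟩ := by
        simp [Fin.ext_iff, hmod]
      beta_reduce
      rw [hfin]
      have hck := hPcoeff c ⟨k, hkdeg⟩
      intro hc0
      rw [hc0] at hck
      exact hkne hck
    · intro k1 hk1 k2 hk2 h
      have h1' : k1 < n := by
        have := Polynomial.le_natDegree_of_ne_zero (Polynomial.mem_support_iff.mp hk1)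
        have := hPdeg c; omega
      have h2' : k2 < n := by
        have := Polynomial.le_natDegree_of_ne_zero (Polynomial.mem_support_iff.mp hk2)
        have := hPdeg c; omega
      have := congrArg Fin.val h
      simpa [Nat.mod_eq_of_lt h1', Nat.mod_eq_of_lt h2'] using this
  have hnorm_le : ∀ c : Fin n → F,
      hammingNorm c ≤ (∑ i : Fin n, C (c i) * X ^ (i : ℕ)).support.card := by
    intro c
    apply Finset.card_le_card_of_injOn (fun k : Fin n => (k : ℕ))
    · intro k hk
      show (k : ℕ) ∈ (∑ i : Fin n, C (c i) * X ^ (i : ℕ)).support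
      rw [Polynomial.mem_support_iff, hPcoeff c k]
      exact (Finset.mem_filter.mp hk).2
    · exact fun a _ b _ h => Fin.val_injective h
  -- the weight-4 codeword
  set A : F[X] := (X - C 1) * f₁ with hA
  have hAmon : A.Monic := (monic_X_sub_C 1).mul hf₁mon
  have hAdeg : A.natDegree = 3 := by
    rw [hA, Polynomial.natDegree_mul hXC_ne hf₁ne, Polynomial.natDegree_X_sub_C, hf₁deg]
  set w : F[X] := A ^ p ^ s with hw
  have hwmon : w.Monic := hAmon.pow _
  have hwne : w ≠ 0 := hwmon.ne_zero
  have hwdeg : w.natDegree = 3 * p ^ s := by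
    rw [hw, Polynomial.natDegree_pow, hAdeg]; ring
  have hwdeglt : w.natDegree < n := by rw [hwdeg]; omega
  have hgw : (X - C 1 : F[X]) ^ i * f₁ ^ j ∣ w := by
    rw [hw, hA, mul_pow]
    exact mul_dvd_mul (pow_dvd_pow _ hi2) (pow_dvd_pow _ hj2)
  have hAsum : A = C (A.coeff 0) * X ^ 0 + C (A.coeff 1) * X ^ 1 + C (A.coeff 2) * X ^ 2
      + C (A.coeff 3) * X ^ 3 := by
    conv_lhs => rw [Polynomial.as_sum_range' A 4 (by omega)]
    rw [Finset.sum_range_succ, Finset.sum_range_succ, Finset.sum_range_succ,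
      Finset.sum_range_one]
    simp [Polynomial.C_mul_X_pow_eq_monomial, Polynomial.C_mul_X_eq_monomial]
  have hwsum : w = C (A.coeff 0 ^ p ^ s) * X ^ (0 * p ^ s)
      + C (A.coeff 1 ^ p ^ s) * X ^ (1 * p ^ s)
      + C (A.coeff 2 ^ p ^ s) * X ^ (2 * p ^ s)
      + C (A.coeff 3 ^ p ^ s) * X ^ (3 * p ^ s) := by
    rw [hw]
    conv_lhs => rw [hAsum]
    rw [add_pow_char_pow, add_pow_char_pow, add_pow_char_pow]
    simp only [mul_pow, ← map_pow, ← pow_mul]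
  have hsupp : w.support ⊆ {0 * p ^ s, 1 * p ^ s, 2 * p ^ s, 3 * p ^ s} := by
    intro r hr
    rw [Polynomial.mem_support_iff] at hr
    by_contra hrn
    apply hr
    simp only [Finset.mem_insert, Finset.mem_singleton] at hrn
    push_neg at hrn
    obtain ⟨h0', h1', h2', h3'⟩ := hrn
    rw [hwsum, coeff_add, coeff_add, coeff_add, coeff_C_mul, coeff_C_mul, coeff_C_mul,
      coeff_C_mul, coeff_X_pow, coeff_X_pow, coeff_X_pow, coeff_X_pow,
      if_neg h0', if_neg h1', if_neg h2', if_neg h3']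
    simp
  have hwcard : w.support.card ≤ 4 := by
    refine le_trans (Finset.card_le_card hsupp) ?_
    refine le_trans (Finset.card_insert_le _ _) (Nat.succ_le_succ ?_)
    refine le_trans (Finset.card_insert_le _ _) (Nat.succ_le_succ ?_)
    refine le_trans (Finset.card_insert_le _ _) (Nat.succ_le_succ ?_)
    simp
  set cw : Fin n → F := fun k => w.coeff (k : ℕ) with hcwdef
  have hcwmem : cw ∈ cyclicCode F n ((X - C 1) ^ i * f₁ ^ j) := hdvd_mem w hwdeglt hgw
  have hcwP : (∑ i : Fin n, C (cw i) * X ^ (i : ℕ)) = w := hPQall w hwdeglt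
  have hcwne : cw ≠ 0 := by
    intro h
    have hlead : cw ⟨3 * p ^ s, by omega⟩ = 1 := by
      show w.coeff (3 * p ^ s) = 1
      rw [← hwdeg]
      exact hwmon.coeff_natDegree
    rw [h] at hlead
    simp at hlead
  have hlow : ∀ c : Fin n → F, c ∈ cyclicCode F n ((X - C 1) ^ i * f₁ ^ j) → c ≠ 0 →
      4 ≤ hammingNorm c := by
    intro c hc hc0
    have hdvd := hmem_dvd c hc
    have h4 := key _ (hPne c hc0) (hPdeg c)
      ((dvd_mul_right _ _).trans hdvd)
      (((dvd_pow_self f₁ hj1.ne').trans (dvd_mul_left _ _)).trans hdvd)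
    exact le_trans h4 (hnorm_ge c)
  have hnormcw : hammingNorm cw = 4 := by
    apply le_antisymm
    · calc hammingNorm cw ≤ (∑ i : Fin n, C (cw i) * X ^ (i : ℕ)).support.card := hnorm_le cw
      _ = w.support.card := by rw [hcwP]
      _ ≤ 4 := hwcard
    · exact hlow cw hcwmem hcwne
  have h4mem : (4 : ℕ) ∈ {w' | ∃ c ∈ cyclicCode F n ((X - C 1) ^ i * f₁ ^ j),
      c ≠ 0 ∧ hammingNorm c = w'} := ⟨cw, hcwmem, hcwne, hnormcw⟩
  apply le_antisymm
  · exact Nat.sInf_le h4mem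
  · apply le_csInf ⟨4, h4mem⟩
    rintro w' ⟨c, hcmem, hc0, rfl⟩
    exact hlow c hcmem hc0
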